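/- The tangential variety τ_{d,n} = closure of {[L^{d−1}M] : L, M linear forms in n+1 variables} ⊂ ℙ(Sym^d ℂ^{n+1}) is strongly concise: for every monomial x^α of degree d in n+1 variables, there exist linear forms L and M such that the coefficient of x^α in L^{d−1}M is zero while the coefficients of all other degree-d monomials are nonzero. -/

import Mathlib

open MvPolynomial

/-- A polynomial vanishes identically on a set of points of affine space. -/
def vanishesOn {n : ℕ} (f : MvPolynomial (Fin n) ℂ) (S : Set (Fin n → ℂ)) : Prop :=
  ∀ v ∈ S, MvPolynomial.eval v f = 0

/-- Zariski closure of a set of points: the zero locus of its vanishing ideal. -/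
def zclosure {n : ℕ} (S : Set (Fin n → ℂ)) : Set (Fin n → ℂ) :=
  {v | ∀ f : MvPolynomial (Fin n) ℂ, vanishesOn f S → MvPolynomial.eval v f = 0}

/-- Zariski-irreducibility: nonempty and the vanishing ideal is prime. -/
def ZIrred {n : ℕ} (S : Set (Fin n → ℂ)) : Prop :=
  S.Nonempty ∧ ∀ f g : MvPolynomial (Fin n) ℂ,
    vanishesOn (f * g) S → vanishesOn f S ∨ vanishesOn g S

/-- Krull dimension of (the Zariski closure of) a set, as the order-theoretic
Krull dimension of chains of irreducible Zariski-closed subsets of it. -/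
noncomputable def zdim {n : ℕ} (S : Set (Fin n → ℂ)) : WithBot ℕ∞ :=
  Order.krullDim {T : Set (Fin n → ℂ) // zclosure T = T ∧ ZIrred T ∧ T ⊆ zclosure S}

/-- Projective equality of coordinate vectors: equality up to a nonzero scalar. -/
def ProjEq {n : ℕ} (v w : Fin n → ℂ) : Prop :=
  ∃ c : ℂ, c ≠ 0 ∧ w = c • v

/-- The set of (representatives of) Hadamard products of `m` points of `X`. -/
def hprodSet {n : ℕ} (X : Set (Fin n → ℂ)) (m : ℕ) : Set (Fin n → ℂ) :=
  {p | ∃ f : Fin m → (Fin n → ℂ), (∀ i, f i ∈ X) ∧ ProjEq (∏ i, f i) p}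

/-- The `m`-th Hadamard power of `X`: the Zariski closure of the set of Hadamard
products of `m` points of `X`. -/
def hpow {n : ℕ} (X : Set (Fin n → ℂ)) (m : ℕ) : Set (Fin n → ℂ) :=
  zclosure (hprodSet X m)

/-- `p` is an (actual) Hadamard product of `m` points of `X`. -/
def HadDecomp {n : ℕ} (X : Set (Fin n → ℂ)) (m : ℕ) (p : Fin n → ℂ) : Prop :=
  p ∈ hprodSet X m

/-- The Hadamard-`X`-rank of `p` is at most `r` (and finite, in particular). -/
def HrkLe {n : ℕ} (X : Set (Fin n → ℂ)) (r : ℕ) (p : Fin n → ℂ) : Prop :=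
  ∃ m, 1 ≤ m ∧ m ≤ r ∧ HadDecomp X m p

/-- The Hadamard-`X`-rank of `p` is exactly `r`. -/
def HrkEq {n : ℕ} (X : Set (Fin n → ℂ)) (r : ℕ) (p : Fin n → ℂ) : Prop :=
  HadDecomp X r p ∧ ∀ m, 1 ≤ m → m < r → ¬ HadDecomp X m p

/-- The Hadamard-`X`-rank of `p` is finite. -/
def HrkFin {n : ℕ} (X : Set (Fin n → ℂ)) (p : Fin n → ℂ) : Prop :=
  ∃ m, 1 ≤ m ∧ HadDecomp X m p

/-- `X ⊂ ℙ^{n-1}` is strongly concise: for each coordinate `i` there is a point of `X`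
whose `i`-th coordinate vanishes and all other coordinates are nonzero. -/
def StronglyConcise {n : ℕ} (X : Set (Fin n → ℂ)) : Prop :=
  ∀ i : Fin n, ∃ v ∈ X, v i = 0 ∧ ∀ j ≠ i, v j ≠ 0

open Finset
/-- Coefficient of a product of powers of variables. -/
lemma aux_coeff_prod_X_pow {N : ℕ} (γ : Fin N →₀ ℕ) (k : Fin N → ℕ) :
    MvPolynomial.coeff γ (∏ i, (MvPolynomial.X i : MvPolynomial (Fin N) ℂ) ^ k i)
      = if k = ⇑γ then 1 else 0 := by
  set s : Fin N →₀ ℕ := Finsupp.equivFunOnFinite.symm k with hs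
  have hsk : ⇑s = k := rfl
  have h1 : ∏ i, (MvPolynomial.X i : MvPolynomial (Fin N) ℂ) ^ k i
      = ∏ i ∈ s.support, (MvPolynomial.X i : MvPolynomial (Fin N) ℂ) ^ s i := by
    rw [← hsk]
    exact (Finset.prod_subset (Finset.subset_univ s.support) (fun i _ hi => by
      rw [Finsupp.notMem_support_iff] at hi; rw [hi, pow_zero])).symm
  rw [h1, MvPolynomial.prod_X_pow_eq_monomial, MvPolynomial.coeff_monomial]
  by_cases h : k = ⇑γ
  · have : γ = s := by ext i; rw [hsk, h]
    simp [h, this]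
  · have : γ ≠ s := fun hgs => h (by rw [← hsk, hgs])
    simp [h, this, Ne.symm this]

/-- Coefficient in the multinomial expansion of a power of the sum of variables. -/
lemma aux_coeff_sum_X_pow {N : ℕ} (m : ℕ) (γ : Fin N →₀ ℕ)
    (hγ : ∑ i, γ i = m) :
    MvPolynomial.coeff γ ((∑ i, (MvPolynomial.X i : MvPolynomial (Fin N) ℂ)) ^ m)
      = Nat.multinomial Finset.univ ⇑γ := by
  rw [Finset.sum_pow_eq_sum_piAntidiag, MvPolynomial.coeff_sum]
  rw [Finset.sum_eq_single (⇑γ)]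
  · rw [← MvPolynomial.C_eq_coe_nat, MvPolynomial.coeff_C_mul, aux_coeff_prod_X_pow]
    simp
  · intro k hk hne
    rw [← MvPolynomial.C_eq_coe_nat, MvPolynomial.coeff_C_mul, aux_coeff_prod_X_pow,
      if_neg hne, mul_zero]
  · intro h
    exact absurd (Finset.mem_piAntidiag.2 ⟨hγ, fun i _ => Finset.mem_univ i⟩) h

/-- Factorial identity for removing one unit from a multi-index. -/
lemma aux_fact_mul_multinomial {N : ℕ} (β : Fin N →₀ ℕ) (j : Fin N) (h : β j ≠ 0) (d : ℕ)
    (hd : ∑ i, β i = d) :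
    (∏ i, (β i).factorial) * Nat.multinomial Finset.univ ⇑(β - Finsupp.single j 1 : Fin N →₀ ℕ)
      = β j * (d - 1).factorial := by
  set γ : Fin N →₀ ℕ := β - Finsupp.single j 1 with hγdef
  have hγj : γ j = β j - 1 := by simp [hγdef, Finsupp.sub_apply]
  have hγi : ∀ i, i ≠ j → γ i = β i := by
    intro i hi
    simp [hγdef, Finsupp.sub_apply, Finsupp.single_apply, (Ne.symm hi : j ≠ i)]
  have hsum : ∑ i, γ i = d - 1 := by
    have h1 : ∑ i, γ i = γ j + ∑ i ∈ Finset.univ.erase j, γ i := by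
      rw [Finset.add_sum_erase _ _ (Finset.mem_univ j)]
    have h2 : d = β j + ∑ i ∈ Finset.univ.erase j, β i := by
      rw [← hd, Finset.add_sum_erase _ _ (Finset.mem_univ j)]
    have h3 : ∑ i ∈ Finset.univ.erase j, γ i = ∑ i ∈ Finset.univ.erase j, β i :=
      Finset.sum_congr rfl fun i hi => hγi i (Finset.ne_of_mem_erase hi)
    omega
  have hpe : ∏ i ∈ Finset.univ.erase j, (β i).factorial
      = ∏ i ∈ Finset.univ.erase j, (γ i).factorial :=
    Finset.prod_congr rfl fun i hi => by rw [hγi i (Finset.ne_of_mem_erase hi)]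
  have hprod : ∏ i, (β i).factorial = β j * ∏ i, (γ i).factorial := by
    rw [← Finset.mul_prod_erase _ _ (Finset.mem_univ j),
        ← Finset.mul_prod_erase _ (fun i => (γ i).factorial) (Finset.mem_univ j),
        hpe, hγj, ← mul_assoc, Nat.mul_factorial_pred h]
  rw [hprod, mul_assoc, Nat.multinomial_spec, hsum]

/-- Uniqueness of base-`t` representations with digits `< t`. -/
lemma aux_digits_inj : ∀ (N t : ℕ) (f g : Fin N → ℕ), (∀ i, f i < t) → (∀ i, g i < t) →
    (∑ i, f i * t ^ (i : ℕ)) = (∑ i, g i * t ^ (i : ℕ)) → f = g := by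
  intro N
  induction N with
  | zero => intro t f g _ _ _; funext i; exact absurd i.isLt (by omega)
  | succ N ih =>
    intro t f g hf hg hsum
    have ht : 0 < t := lt_of_le_of_lt (Nat.zero_le _) (hf 0)
    rw [Fin.sum_univ_succ, Fin.sum_univ_succ] at hsum
    have hre : ∀ (h : Fin (N + 1) → ℕ),
        h 0 * t ^ ((0 : Fin (N+1)) : ℕ) + ∑ i : Fin N, h i.succ * t ^ ((i.succ : Fin (N+1)) : ℕ)
          = h 0 + t * ∑ i : Fin N, h i.succ * t ^ (i : ℕ) := by
      intro h
      rw [Finset.mul_sum]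
      congr 1
      · simp
      · refine Finset.sum_congr rfl fun i _ => ?_
        rw [Fin.val_succ, pow_succ]
        ring
    rw [hre f, hre g] at hsum
    have h0 : f 0 = g 0 := by
      have := congrArg (· % t) hsum
      simpa [Nat.add_mul_mod_self_left, Nat.mod_eq_of_lt (hf 0), Nat.mod_eq_of_lt (hg 0)]
        using this
    have htail : (∑ i : Fin N, f i.succ * t ^ (i : ℕ)) = ∑ i : Fin N, g i.succ * t ^ (i : ℕ) := by
      have hf0 := hf 0; have hg0 := hg 0
      have := congrArg (· / t) hsum
      simpa [Nat.add_mul_div_left _ _ ht, Nat.div_eq_of_lt hf0, Nat.div_eq_of_lt hg0]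
        using this
    have := ih t (fun i => f i.succ) (fun i => g i.succ) (fun i => hf i.succ)
      (fun i => hg i.succ) htail
    funext i
    refine Fin.cases h0 (fun i => congrFun this i) i

/-- The coefficient criterion: `coeff β (L^{d-1}·M)` vanishes iff `∑ βⱼ bⱼ = 0`. -/
lemma aux_main {N d : ℕ} (hd : 1 ≤ d) (b : Fin N → ℂ) (β : Fin N →₀ ℕ)
    (hβ : ∑ i, β i = d) :
    (MvPolynomial.coeff β ((∑ i, (MvPolynomial.X i : MvPolynomial (Fin N) ℂ)) ^ (d - 1) *
        (∑ i, MvPolynomial.C (b i) * MvPolynomial.X i)) = 0)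
      ↔ ∑ j, (β j : ℂ) * b j = 0 := by
  classical
  set L : MvPolynomial (Fin N) ℂ := ∑ i, MvPolynomial.X i with hL
  have hexp : L ^ (d - 1) * (∑ i, MvPolynomial.C (b i) * MvPolynomial.X i)
      = ∑ j, MvPolynomial.C (b j) * (L ^ (d - 1) * MvPolynomial.X j) := by
    rw [Finset.mul_sum]
    exact Finset.sum_congr rfl fun j _ => by ring
  have hterm : ∀ j : Fin N, MvPolynomial.coeff β (L ^ (d - 1) * MvPolynomial.X j)
      = if β j ≠ 0 then
          (Nat.multinomial Finset.univ ⇑(β - Finsupp.single j 1 : Fin N →₀ ℕ) : ℂ) else 0 := by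
    intro j
    rw [MvPolynomial.coeff_mul_X']
    by_cases hj : β j ≠ 0
    · have hγsum : ∑ i, (β - Finsupp.single j 1 : Fin N →₀ ℕ) i = d - 1 := by
        have h1' : (β - Finsupp.single j 1 : Fin N →₀ ℕ) j = β j - 1 := by
          simp [Finsupp.sub_apply]
        have h2' : ∀ i, i ≠ j → (β - Finsupp.single j 1 : Fin N →₀ ℕ) i = β i := by
          intro i hi
          simp [Finsupp.sub_apply, Finsupp.single_apply, (Ne.symm hi : j ≠ i)]
        have e1 : ∑ i, (β - Finsupp.single j 1 : Fin N →₀ ℕ) i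
            = (β - Finsupp.single j 1 : Fin N →₀ ℕ) j
              + ∑ i ∈ Finset.univ.erase j, (β - Finsupp.single j 1 : Fin N →₀ ℕ) i := by
          rw [Finset.add_sum_erase _ _ (Finset.mem_univ j)]
        have e2 : d = β j + ∑ i ∈ Finset.univ.erase j, β i := by
          rw [← hβ, Finset.add_sum_erase _ _ (Finset.mem_univ j)]
        have e3 : ∑ i ∈ Finset.univ.erase j, (β - Finsupp.single j 1 : Fin N →₀ ℕ) i
            = ∑ i ∈ Finset.univ.erase j, β i :=
          Finset.sum_congr rfl fun i hi => h2' i (Finset.ne_of_mem_erase hi)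
        omega
      rw [if_pos (Finsupp.mem_support_iff.2 hj), if_pos hj, hL,
        aux_coeff_sum_X_pow (d - 1) _ hγsum]
    · rw [if_neg (fun hm => hj (Finsupp.mem_support_iff.1 hm)), if_neg hj]
  have hco : MvPolynomial.coeff β (L ^ (d - 1) * (∑ i, MvPolynomial.C (b i) * MvPolynomial.X i))
      = ∑ j, b j * (if β j ≠ 0 then
          (Nat.multinomial Finset.univ ⇑(β - Finsupp.single j 1 : Fin N →₀ ℕ) : ℂ) else 0) := by
    rw [hexp, MvPolynomial.coeff_sum]
    exact Finset.sum_congr rfl fun j _ => by rw [MvPolynomial.coeff_C_mul, hterm j]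
  have hfβ : (∏ i, ((β i).factorial : ℂ)) ≠ 0 :=
    Finset.prod_ne_zero_iff.2 fun i _ => Nat.cast_ne_zero.2 (Nat.factorial_ne_zero _)
  have hfd : (((d - 1).factorial : ℕ) : ℂ) ≠ 0 := Nat.cast_ne_zero.2 (Nat.factorial_ne_zero _)
  have hkey : (∏ i, ((β i).factorial : ℂ))
        * MvPolynomial.coeff β (L ^ (d - 1) * (∑ i, MvPolynomial.C (b i) * MvPolynomial.X i))
      = (((d - 1).factorial : ℕ) : ℂ) * ∑ j, (β j : ℂ) * b j := by
    rw [hco, Finset.mul_sum, Finset.mul_sum]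
    refine Finset.sum_congr rfl fun j _ => ?_
    by_cases hj : β j ≠ 0
    · rw [if_pos hj]
      have hnat := aux_fact_mul_multinomial β j hj d hβ
      have hc : (∏ i, ((β i).factorial : ℂ))
            * (Nat.multinomial Finset.univ ⇑(β - Finsupp.single j 1 : Fin N →₀ ℕ) : ℂ)
          = (β j : ℂ) * (((d - 1).factorial : ℕ) : ℂ) := by exact_mod_cast hnat
      linear_combination b j * hc
    · rw [if_neg hj]
      push_neg at hj
      simp [hj]
  constructor
  · intro h0
    rw [h0, mul_zero] at hkey
    rcases mul_eq_zero.1 hkey.symm with h | h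
    · exact absurd h hfd
    · exact h
  · intro h0
    rw [h0, mul_zero] at hkey
    rcases mul_eq_zero.1 hkey with h | h
    · exact absurd h hfβ
    · exact h

/-- the tangential variety to the Veronese is strongly concise: for every
monomial `x^α` of degree `d` there are linear forms `L, M` such that the coefficient of
`x^α` in `L^{d-1}·M` vanishes while all other degree-`d` coefficients are nonzero. -/
theorem stmt12 (n d : ℕ) (hd : 1 ≤ d) (α : Fin (n + 1) →₀ ℕ)
    (hα : (α.sum fun _ k => k) = d) :
    ∃ a b : Fin (n + 1) → ℂ,
      MvPolynomial.coeff α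
        ((∑ i, MvPolynomial.C (a i) * MvPolynomial.X i) ^ (d - 1) *
          (∑ i, MvPolynomial.C (b i) * MvPolynomial.X i)) = 0 ∧
      ∀ β : Fin (n + 1) →₀ ℕ, (β.sum fun _ k => k) = d → β ≠ α →
        MvPolynomial.coeff β
          ((∑ i, MvPolynomial.C (a i) * MvPolynomial.X i) ^ (d - 1) *
            (∑ i, MvPolynomial.C (b i) * MvPolynomial.X i)) ≠ 0 := by
  classical
  have hsum_univ : ∀ γ : Fin (n + 1) →₀ ℕ, (γ.sum fun _ k => k) = ∑ i, γ i := fun γ =>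
    Finsupp.sum_fintype _ _ fun _ => rfl
  have hdC : (d : ℂ) ≠ 0 := Nat.cast_ne_zero.2 (by omega)
  set Nnum : (Fin (n + 1) →₀ ℕ) → ℕ := fun γ => ∑ i, γ i * (d + 1) ^ (i : ℕ) with hNnum
  set b : Fin (n + 1) → ℂ :=
    fun j => (((d + 1) ^ (j : ℕ) : ℕ) : ℂ) - (Nnum α : ℂ) / (d : ℂ) with hb
  have hS : ∀ β : Fin (n + 1) →₀ ℕ, (∑ i, β i = d) →
      (∑ j, (β j : ℂ) * b j) = (Nnum β : ℂ) - (Nnum α : ℂ) := by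
    intro β hβ
    have hcast : (∑ j, (β j : ℂ)) = (d : ℂ) := by
      rw [← hβ]; push_cast; rfl
    calc ∑ j, (β j : ℂ) * b j
        = (∑ j, (β j : ℂ) * (((d + 1) ^ (j : ℕ) : ℕ) : ℂ))
            - (∑ j, (β j : ℂ)) * ((Nnum α : ℂ) / (d : ℂ)) := by
          rw [hb, Finset.sum_mul, ← Finset.sum_sub_distrib]
          exact Finset.sum_congr rfl fun j _ => by ring
      _ = (Nnum β : ℂ) - (Nnum α : ℂ) := by
          rw [hcast, mul_comm, div_mul_cancel₀ _ hdC, hNnum]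
          push_cast
          rfl
  have hinj : ∀ β : Fin (n + 1) →₀ ℕ, (∑ i, β i = d) → β ≠ α → Nnum β ≠ Nnum α := by
    intro β hβ hne heq
    have hβlt : ∀ i, β i < d + 1 := fun i =>
      Nat.lt_succ_of_le (hβ ▸ Finset.single_le_sum (f := fun i => β i)
        (fun i _ => Nat.zero_le _) (Finset.mem_univ i))
    have hαlt : ∀ i, α i < d + 1 := fun i =>
      Nat.lt_succ_of_le ((hsum_univ α ▸ hα) ▸ Finset.single_le_sum (f := fun i => α i)
        (fun i _ => Nat.zero_le _) (Finset.mem_univ i))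
    exact hne (DFunLike.coe_injective
      (aux_digits_inj (n + 1) (d + 1) ⇑β ⇑α hβlt hαlt heq))
  refine ⟨fun _ => 1, b, ?_, ?_⟩
  · simp only [map_one, one_mul]
    rw [aux_main hd b α (by rw [← hsum_univ]; exact hα)]
    rw [hS α (by rw [← hsum_univ]; exact hα)]
    ring
  · intro β hβd hne
    simp only [map_one, one_mul]
    intro h0
    have h1 := (aux_main hd b β (by rw [← hsum_univ]; exact hβd)).1 h0
    rw [hS β (by rw [← hsum_univ]; exact hβd)] at h1
    exact sub_ne_zero_of_ne
      (Nat.cast_injective.ne (hinj β (by rw [← hsum_univ]; exact hβd) hne)) h1
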